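/- Consider the index-2 Stokes-type DAE with E₁₁ ∈ ℂ^{n₁×n₁} invertible, A₁₁ ∈ ℂ^{n₁×n₁}, A₂₁ ∈ ℂ^{n₂×n₁} such that A₂₁ E₁₁^{-1} A₂₁ᵀ is invertible, B₁ ∈ ℂ^{n₁×m}, C₁ ∈ ℂ^{p×n₁}, D ∈ ℂ^{p×m}, transfer function G(s) = ℭ(s𝔼 − 𝔸)^{-1}𝔹 + D where 𝔼 = diag(E₁₁, 0), 𝔸 = [[A₁₁, A₂₁ᵀ],[A₂₁, 0]], 𝔹 = [B₁; 0], ℭ = [C₁, 0]. Let σ₁,…,σ_r ∈ ℂ, b₁,…,b_r ∈ ℂ^m, c₁,…,c_r ∈ ℂ^p, assume for each i the matrices [[σᵢE₁₁ − A₁₁, A₂₁ᵀ],[A₂₁, 0]] and [[σᵢE₁₁ᵀ − A₁₁ᵀ, A₂₁ᵀ],[A₂₁, 0]] are invertible, and let (vᵢ, zᵢ) and (wᵢ, qᵢ) solve [[σᵢE₁₁ − A₁₁, A₂₁ᵀ],[A₂₁, 0]][vᵢ; zᵢ] = [B₁ bᵢ; 0] and [[σᵢE₁₁ᵀ − A₁₁ᵀ,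 A₂₁ᵀ],[A₂₁, 0]][wᵢ; qᵢ] = [C₁ᵀ cᵢ; 0]. Set V = [v₁,…,v_r], W = [w₁,…,w_r], Ẽ = Wᵀ E₁₁ V, Ã = Wᵀ A₁₁ V. Then for each j such that σⱼ Ẽ − Ã is invertible, the bitangential Hermite condition cⱼᵀ G′(σⱼ) bⱼ = cⱼᵀ G̃′(σⱼ) bⱼ holds, where G̃(s) = C₁V (sẼ − Ã)^{-1} Wᵀ B₁ + D; explicitly, cⱼᵀ ℭ (σⱼ𝔼 − 𝔸)^{-1} 𝔼 (σⱼ𝔼 − 𝔸)^{-1} 𝔹 bⱼ = cⱼᵀ C₁V (σⱼẼ − Ã)^{-1} Ẽ (σⱼẼ − Ã)^{-1} Wᵀ B₁ bⱼ, and both sides equal wⱼᵀ E₁₁ vⱼ. -/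

import Mathlib

open Matrix

/-- Interpolatory model reduction for index-2 Stokes-type DAEs without spectral
projectors (bitangential Hermite condition).  The bases `V` and `W` are built
from solutions of the saddle-point systems; the reduced model matches the
bitangential Hermite data `cⱼᵀ G′(σⱼ) bⱼ`, and both sides equal `wⱼᵀ E₁₁ vⱼ`. -/
theorem index2_bitangential_hermite_interpolation
    (n₁ n₂ m p r : ℕ)
    (E₁₁ A₁₁ : Matrix (Fin n₁) (Fin n₁) ℂ)
    (A₂₁ : Matrix (Fin n₂) (Fin n₁) ℂ)
    (B₁ : Matrix (Fin n₁) (Fin m) ℂ)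
    (C₁ : Matrix (Fin p) (Fin n₁) ℂ)
    (D : Matrix (Fin p) (Fin m) ℂ)
    (hE : IsUnit E₁₁)
    (hSchur : IsUnit (A₂₁ * E₁₁⁻¹ * A₂₁ᵀ))
    (σ : Fin r → ℂ) (b : Fin r → Fin m → ℂ) (c : Fin r → Fin p → ℂ)
    (v w : Fin r → Fin n₁ → ℂ) (z q : Fin r → Fin n₂ → ℂ)
    (hsadV : ∀ i, IsUnit (fromBlocks (σ i • E₁₁ - A₁₁) A₂₁ᵀ A₂₁ 0))
    (hsadW : ∀ i, IsUnit (fromBlocks (σ i • E₁₁ᵀ - A₁₁ᵀ) A₂₁ᵀ A₂₁ 0))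
    (hv : ∀ i, (fromBlocks (σ i • E₁₁ - A₁₁) A₂₁ᵀ A₂₁ 0).mulVec
        (Sum.elim (v i) (z i)) = Sum.elim (B₁.mulVec (b i)) 0)
    (hw : ∀ i, (fromBlocks (σ i • E₁₁ᵀ - A₁₁ᵀ) A₂₁ᵀ A₂₁ 0).mulVec
        (Sum.elim (w i) (q i)) = Sum.elim (C₁ᵀ.mulVec (c i)) 0)
    (V W : Matrix (Fin n₁) (Fin r) ℂ)
    (hV : V = (Matrix.of v)ᵀ)
    (hW : W = (Matrix.of w)ᵀ)
    (j : Fin r)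
    (hred : IsUnit (σ j • (Wᵀ * E₁₁ * V) - Wᵀ * A₁₁ * V)) :
    (c j ⬝ᵥ ((fromCols C₁ (0 : Matrix (Fin p) (Fin n₂) ℂ)
        * (σ j • fromBlocks E₁₁ 0 0 0 - fromBlocks A₁₁ A₂₁ᵀ A₂₁ 0)⁻¹
        * fromBlocks E₁₁ 0 0 (0 : Matrix (Fin n₂) (Fin n₂) ℂ)
        * (σ j • fromBlocks E₁₁ 0 0 0 - fromBlocks A₁₁ A₂₁ᵀ A₂₁ 0)⁻¹
        * fromRows B₁ (0 : Matrix (Fin n₂) (Fin m) ℂ)).mulVec (b j))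
      = c j ⬝ᵥ ((C₁ * V * (σ j • (Wᵀ * E₁₁ * V) - Wᵀ * A₁₁ * V)⁻¹ * (Wᵀ * E₁₁ * V)
          * (σ j • (Wᵀ * E₁₁ * V) - Wᵀ * A₁₁ * V)⁻¹ * (Wᵀ * B₁)).mulVec (b j)))
    ∧ c j ⬝ᵥ ((fromCols C₁ (0 : Matrix (Fin p) (Fin n₂) ℂ)
        * (σ j • fromBlocks E₁₁ 0 0 0 - fromBlocks A₁₁ A₂₁ᵀ A₂₁ 0)⁻¹
        * fromBlocks E₁₁ 0 0 (0 : Matrix (Fin n₂) (Fin n₂) ℂ)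
        * (σ j • fromBlocks E₁₁ 0 0 0 - fromBlocks A₁₁ A₂₁ᵀ A₂₁ 0)⁻¹
        * fromRows B₁ (0 : Matrix (Fin n₂) (Fin m) ℂ)).mulVec (b j))
      = w j ⬝ᵥ E₁₁.mulVec (v j) := by
  -- extract component equations of the saddle-point systems
  have hv1 : ∀ i, (σ i • E₁₁ - A₁₁) *ᵥ v i + A₂₁ᵀ *ᵥ z i = B₁ *ᵥ b i := by
    intro i
    have h := hv i
    rw [fromBlocks_mulVec] at h
    exact funext fun k => by simpa using congrFun h (Sum.inl k)
  have hv2 : ∀ i, A₂₁ *ᵥ v i = 0 := by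
    intro i
    have h := hv i
    rw [fromBlocks_mulVec] at h
    exact funext fun k => by simpa using congrFun h (Sum.inr k)
  have hw1 : ∀ i, (σ i • E₁₁ᵀ - A₁₁ᵀ) *ᵥ w i + A₂₁ᵀ *ᵥ q i = C₁ᵀ *ᵥ c i := by
    intro i
    have h := hw i
    rw [fromBlocks_mulVec] at h
    exact funext fun k => by simpa using congrFun h (Sum.inl k)
  have hw2 : ∀ i, A₂₁ *ᵥ w i = 0 := by
    intro i
    have h := hw i
    rw [fromBlocks_mulVec] at h
    exact funext fun k => by simpa using congrFun h (Sum.inr k)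
  -- the big pencil matrix
  set S : Matrix (Fin n₁ ⊕ Fin n₂) (Fin n₁ ⊕ Fin n₂) ℂ :=
    σ j • fromBlocks E₁₁ 0 0 0 - fromBlocks A₁₁ A₂₁ᵀ A₂₁ 0 with hS
  have hSblocks : S = fromBlocks (σ j • E₁₁ - A₁₁) (-A₂₁ᵀ) (-A₂₁) 0 := by
    rw [hS, fromBlocks_smul]
    ext i k
    rcases i with i | i <;> rcases k with k | k <;>
      simp [fromBlocks, sub_eq_add_neg]
  -- invertibility of S
  have hSunit : IsUnit S := by
    set Dm : Matrix (Fin n₁ ⊕ Fin n₂) (Fin n₁ ⊕ Fin n₂) ℂ :=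
      fromBlocks 1 0 0 (-1) with hDm
    have hDmsq : Dm * Dm = 1 := by
      rw [hDm, fromBlocks_multiply]
      simp [← fromBlocks_one]
    have hDmu : IsUnit Dm := ⟨⟨Dm, Dm, hDmsq, hDmsq⟩, rfl⟩
    have : S = Dm * (fromBlocks (σ j • E₁₁ - A₁₁) A₂₁ᵀ A₂₁ 0) * Dm := by
      rw [hSblocks, hDm, fromBlocks_multiply, fromBlocks_multiply]
      simp
    rw [this]
    exact (hDmu.mul (hsadV j)).mul hDmu
  have hSdet : IsUnit S.det := (isUnit_iff_isUnit_det S).mp hSunit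
  -- right solution of the full system
  have hx : S *ᵥ (Sum.elim (v j) (-(z j))) = Sum.elim (B₁ *ᵥ b j) 0 := by
    rw [hSblocks, fromBlocks_mulVec]
    simp only [Sum.elim_comp_inl, Sum.elim_comp_inr, neg_mulVec, mulVec_neg,
      zero_mulVec, add_zero, neg_neg]
    rw [hv1 j, hv2 j, neg_zero]
    simp
  -- left solution of the full system
  have hy : (Sum.elim (w j) (-(q j))) ᵥ* S = Sum.elim (c j ᵥ* C₁) 0 := by
    rw [hSblocks, vecMul_fromBlocks]
    simp only [Sum.elim_comp_inl, Sum.elim_comp_inr, vecMul_neg, neg_vecMul,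
      vecMul_zero, add_zero, neg_neg]
    have h1 : w j ᵥ* (σ j • E₁₁ - A₁₁) + q j ᵥ* A₂₁ = c j ᵥ* C₁ := by
      have e1 : w j ᵥ* (σ j • E₁₁ - A₁₁) = (σ j • E₁₁ᵀ - A₁₁ᵀ) *ᵥ w j := by
        rw [← vecMul_transpose]; congr 1
      have e2 : q j ᵥ* A₂₁ = A₂₁ᵀ *ᵥ q j := by
        rw [← vecMul_transpose, transpose_transpose]
      rw [e1, e2, hw1 j, ← vecMul_transpose, transpose_transpose]
    have h2 : w j ᵥ* A₂₁ᵀ = 0 := by rw [vecMul_transpose, hw2 j]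
    rw [h1, h2, neg_zero]
  -- inverse solves
  have hxinv : S⁻¹ *ᵥ (Sum.elim (B₁ *ᵥ b j) 0) = Sum.elim (v j) (-(z j)) := by
    rw [← hx, mulVec_mulVec, nonsing_inv_mul S hSdet, one_mulVec]
  have hyinv : (Sum.elim (c j ᵥ* C₁) 0) ᵥ* S⁻¹ = Sum.elim (w j) (-(q j)) := by
    rw [← hy, vecMul_vecMul, mul_nonsing_inv S hSdet, vecMul_one]
  -- the full-order side equals wⱼᵀ E₁₁ vⱼ
  have hLHS : c j ⬝ᵥ ((fromCols C₁ (0 : Matrix (Fin p) (Fin n₂) ℂ) * S⁻¹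
      * fromBlocks E₁₁ 0 0 (0 : Matrix (Fin n₂) (Fin n₂) ℂ) * S⁻¹
      * fromRows B₁ (0 : Matrix (Fin n₂) (Fin m) ℂ)) *ᵥ b j)
      = w j ⬝ᵥ E₁₁ *ᵥ v j := by
    have s1 : fromRows B₁ (0 : Matrix (Fin n₂) (Fin m) ℂ) *ᵥ b j
        = Sum.elim (B₁ *ᵥ b j) 0 := by simp
    have s2 : fromBlocks E₁₁ 0 0 (0 : Matrix (Fin n₂) (Fin n₂) ℂ)
        *ᵥ Sum.elim (v j) (-(z j)) = Sum.elim (E₁₁ *ᵥ v j) 0 := by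
      rw [fromBlocks_mulVec]; simp
    have s3 : c j ᵥ* fromCols C₁ (0 : Matrix (Fin p) (Fin n₂) ℂ)
        = Sum.elim (c j ᵥ* C₁) 0 := by simp
    simp only [← mulVec_mulVec]
    rw [s1, hxinv, s2, dotProduct_mulVec, dotProduct_mulVec, s3, hyinv]
    simp [sumElim_dotProduct_sumElim]
  -- the reduced pencil
  set K : Matrix (Fin r) (Fin r) ℂ := σ j • (Wᵀ * E₁₁ * V) - Wᵀ * A₁₁ * V with hKdef
  have hKdet : IsUnit K.det := (isUnit_iff_isUnit_det K).mp hred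
  have hK : K = Wᵀ * ((σ j • E₁₁ - A₁₁) * V) := by
    rw [hKdef]
    rw [Matrix.sub_mul, Matrix.mul_sub, Matrix.smul_mul, Matrix.mul_smul,
      Matrix.mul_assoc, Matrix.mul_assoc]
  have hWTapp : ∀ (u : Fin n₁ → ℂ) (i : Fin r), (Wᵀ *ᵥ u) i = w i ⬝ᵥ u := by
    intro u i; simp [hW, mulVec, dotProduct]
  have hKentry : ∀ i k, K i k = w i ⬝ᵥ ((σ j • E₁₁ - A₁₁) *ᵥ v k) := by
    intro i k
    rw [hK]
    have : ((σ j • E₁₁ - A₁₁) * V) = fun t k => ((σ j • E₁₁ - A₁₁) *ᵥ v k) t := by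
      ext t k'; simp [mul_apply, hV, mulVec, dotProduct]
    rw [mul_apply]; simp [hW, dotProduct, this]
  have hAq : ∀ i, w i ⬝ᵥ (A₂₁ᵀ *ᵥ z j) = 0 := by
    intro i
    rw [dotProduct_mulVec, vecMul_transpose, hw2 i, zero_dotProduct]
  set e : Fin r → ℂ := Pi.single j 1 with he
  have hKe : K *ᵥ e = Wᵀ *ᵥ (B₁ *ᵥ b j) := by
    ext i
    have hMv : (σ j • E₁₁ - A₁₁) *ᵥ v j = B₁ *ᵥ b j - A₂₁ᵀ *ᵥ z j :=
      eq_sub_of_add_eq (hv1 j)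
    simp only [he, mulVec_single, mul_one, MulOpposite.op_one, one_smul, col_apply]
    rw [hWTapp, hKentry, hMv, dotProduct_sub, hAq, sub_zero]
  have hKeinv : K⁻¹ *ᵥ (Wᵀ *ᵥ (B₁ *ᵥ b j)) = e := by
    rw [← hKe, mulVec_mulVec, nonsing_inv_mul K hKdet, one_mulVec]
  have hcK : (c j ᵥ* C₁) ᵥ* V = e ᵥ* K := by
    ext i
    have hL : ((c j ᵥ* C₁) ᵥ* V) i = (c j ᵥ* C₁) ⬝ᵥ v i := by
      simp [vecMul, hV, dotProduct]
    have hR : (e ᵥ* K) i = K j i := by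
      rw [he]
      show Pi.single j (1:ℂ) ⬝ᵥ (fun k => K k i) = K j i
      rw [single_dotProduct, one_mul]
    rw [hL, hR, hKentry, dotProduct_mulVec]
    have hwM : w j ᵥ* (σ j • E₁₁ - A₁₁) = C₁ᵀ *ᵥ c j - A₂₁ᵀ *ᵥ q j := by
      have : w j ᵥ* (σ j • E₁₁ - A₁₁) = (σ j • E₁₁ᵀ - A₁₁ᵀ) *ᵥ w j := by
        rw [← vecMul_transpose]; congr 1
      rw [this]
      exact eq_sub_of_add_eq (hw1 j)
    rw [hwM, sub_dotProduct]
    have h0 : (A₂₁ᵀ *ᵥ q j) ⬝ᵥ v i = 0 := by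
      rw [dotProduct_comm, dotProduct_mulVec, vecMul_transpose, hv2 i,
        zero_dotProduct]
    have h1 : (C₁ᵀ *ᵥ c j) ⬝ᵥ v i = (c j ᵥ* C₁) ⬝ᵥ v i := by
      rw [mulVec_transpose]
    rw [h0, h1, sub_zero]
  -- the reduced side equals wⱼᵀ E₁₁ vⱼ
  have hVe : V *ᵥ e = v j := by
    ext t; simp only [he, mulVec_single, mul_one, MulOpposite.op_one, one_smul, col_apply]; rw [hV]; rfl
  have hRED : c j ⬝ᵥ ((C₁ * V * K⁻¹ * (Wᵀ * E₁₁ * V) * K⁻¹ * (Wᵀ * B₁)) *ᵥ b j)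
      = w j ⬝ᵥ E₁₁ *ᵥ v j := by
    simp only [← mulVec_mulVec]
    rw [hKeinv, hVe, dotProduct_mulVec, dotProduct_mulVec, dotProduct_mulVec,
      hcK, vecMul_vecMul, mul_nonsing_inv K hKdet, vecMul_one, he]
    rw [show (Wᵀ *ᵥ (E₁₁ *ᵥ v j)) = fun i => w i ⬝ᵥ (E₁₁ *ᵥ v j) from
      funext fun i => hWTapp _ i]
    rw [single_dotProduct, one_mul]
  exact ⟨hLHS.trans hRED.symm, hLHS⟩
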